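/- arXiv:1901.08571 — 2 statements merged into one kernel-verified Lean document; each statement's English description precedes it below -/
import Mathlib

section
/- Let m > 1/2, let n ≥ 2 and r be integers with 1 ≤ r ≤ n/2, and set c̄_m = Σ_{k=1}^∞ k^{−2m}. Define λ_{c,r} = Σ_{k=1}^∞ (2π(kn−r))^{−2m} + Σ_{k=0}^∞ (2π(kn+r))^{−2m} and λ_{d,r} = Σ_{k=1}^∞ (2π(kn−r))^{−4m} + Σ_{k=0}^∞ (2π(kn+r))^{−4m}. Then λ_{c,r}² − λ_{d,r} ≤ 2(1 + 2^{1−2m} c̄_m)(2πr)^{−2m}(πn)^{−2m} + (1 + 2^{1−2m} c̄_m)² (πn)^{−4m}. -/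
open Real

noncomputable section


lemma my_summable_base {q : ℝ} (hq : 1 < q) :
    Summable (fun k : ℕ => ((k : ℝ) + 1) ^ (-q)) := by
  have h1 := Real.summable_nat_rpow.mpr (show -q < -1 by linarith)
  have h2 := (summable_nat_add_iff 1).mpr h1
  simpa [Nat.cast_add] using h2

lemma my_summable_aux {q : ℝ} (hq : 1 < q) {f : ℕ → ℝ} (hf : ∀ k : ℕ, ((k : ℝ) + 1) ≤ f k) :
    Summable (fun k : ℕ => (f k) ^ (-q)) := by
  have hpos : ∀ k : ℕ, (0 : ℝ) < f k := fun k =>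
    lt_of_lt_of_le (by positivity) (hf k)
  refine Summable.of_nonneg_of_le (fun k => Real.rpow_nonneg (hpos k).le _) (fun k => ?_)
    (my_summable_base hq)
  exact Real.rpow_le_rpow_of_nonpos (by positivity) (hf k) (by linarith)

lemma my_tsum_bound {q : ℝ} (hq : 1 < q) {f : ℕ → ℝ} (c : ℝ) (hc : 0 < c)
    (hf : ∀ k : ℕ, ((k : ℝ) + 1) ≤ f k)
    (hfc : ∀ k : ℕ, c * ((k : ℝ) + 1) ≤ f k) :
    ∑' k : ℕ, (f k) ^ (-q) ≤ c ^ (-q) * ∑' k : ℕ, ((k : ℝ) + 1) ^ (-q) := by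
  rw [← tsum_mul_left]
  refine Summable.tsum_le_tsum (fun k => ?_) (my_summable_aux hq hf)
    ((my_summable_base hq).mul_left _)
  have hpos : (0 : ℝ) < f k := lt_of_lt_of_le (by positivity) (hf k)
  calc (f k) ^ (-q) ≤ (c * ((k : ℝ) + 1)) ^ (-q) :=
        Real.rpow_le_rpow_of_nonpos (by positivity) (hfc k) (by linarith)
    _ = c ^ (-q) * ((k : ℝ) + 1) ^ (-q) := Real.mul_rpow hc.le (by positivity)

/-- `λ_{c,r} = ∑_{k=1}^∞ (2π(kn-r))^{-2m} + ∑_{k=0}^∞ (2π(kn+r))^{-2m}`. -/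
def lamC (m : ℝ) (n : ℕ) (r : ℕ) : ℝ :=
  (∑' k : ℕ, (2 * π * (((k : ℝ) + 1) * n - r)) ^ (-(2 * m)))
    + ∑' k : ℕ, (2 * π * ((k : ℝ) * n + r)) ^ (-(2 * m))

/-- `λ_{d,r} = ∑_{k=1}^∞ (2π(kn-r))^{-4m} + ∑_{k=0}^∞ (2π(kn+r))^{-4m}`. -/
def lamD (m : ℝ) (n : ℕ) (r : ℕ) : ℝ :=
  (∑' k : ℕ, (2 * π * (((k : ℝ) + 1) * n - r)) ^ (-(4 * m)))
    + ∑' k : ℕ, (2 * π * ((k : ℝ) * n + r)) ^ (-(4 * m))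

set_option maxHeartbeats 1000000 in
/-- First step of inequality (point:0) in Lemma S.4:
`λ_{c,r}² - λ_{d,r} ≤ 2(1 + 2^{1-2m} c̄_m)(2πr)^{-2m}(πn)^{-2m} + (1 + 2^{1-2m} c̄_m)²(πn)^{-4m}`. -/
theorem lamC_sq_sub_lamD_bound (m : ℝ) (hm : 1 / 2 < m) (n r : ℕ)
    (hn : 2 ≤ n) (hr1 : 1 ≤ r) (hr : 2 * r ≤ n) :
    (lamC m n r) ^ 2 - lamD m n r ≤
      2 * (1 + (2 : ℝ) ^ (1 - 2 * m) * ∑' k : ℕ, ((k : ℝ) + 1) ^ (-(2 * m))) *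
          (2 * π * r) ^ (-(2 * m)) * (π * n) ^ (-(2 * m)) +
        (1 + (2 : ℝ) ^ (1 - 2 * m) * ∑' k : ℕ, ((k : ℝ) + 1) ^ (-(2 * m))) ^ 2 *
          (π * n) ^ (-(4 * m)) := by
  have hπ := Real.pi_pos
  have hπ3 := Real.pi_gt_three
  have hn' : (2 : ℝ) ≤ n := by exact_mod_cast hn
  have hr' : (1 : ℝ) ≤ r := by exact_mod_cast hr1
  have hrn : 2 * (r : ℝ) ≤ n := by exact_mod_cast hr
  have hq : (1 : ℝ) < 2 * m := by linarith
  have hq4 : (1 : ℝ) < 4 * m := by linarith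
  set fA : ℕ → ℝ := fun k => 2 * π * (((k : ℝ) + 1) * n - r) with hfAdef
  set fB : ℕ → ℝ := fun k => 2 * π * ((k : ℝ) * n + r) with hfBdef
  have hfA : ∀ k : ℕ, ((k : ℝ) + 1) ≤ fA k := by
    intro k
    have hk : (0 : ℝ) ≤ k := Nat.cast_nonneg k
    have h1 : ((k : ℝ) + 1) ≤ ((k : ℝ) + 1) * n - r := by nlinarith
    have h2 : (0 : ℝ) ≤ ((k : ℝ) + 1) * n - r := by nlinarith
    simp only [hfAdef]
    nlinarith
  have hfB : ∀ k : ℕ, ((k : ℝ) + 1) ≤ fB k := by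
    intro k
    have hk : (0 : ℝ) ≤ k := Nat.cast_nonneg k
    have h1 : ((k : ℝ) + 1) ≤ (k : ℝ) * n + r := by nlinarith
    simp only [hfBdef]
    nlinarith
  -- split off the k = 0 term of the second sum in lamC
  have hsB : Summable (fun k : ℕ => (fB k) ^ (-(2 * m))) := my_summable_aux hq hfB
  have hsB4 : Summable (fun k : ℕ => (fB k) ^ (-(4 * m))) := my_summable_aux hq4 hfB
  set t0 : ℝ := (2 * π * (r : ℝ)) ^ (-(2 * m)) with ht0def
  set cbar : ℝ := ∑' k : ℕ, ((k : ℝ) + 1) ^ (-(2 * m)) with hcbardef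
  have hcbar : 0 ≤ cbar := tsum_nonneg fun k => Real.rpow_nonneg (by positivity) _
  set fB' : ℕ → ℝ := fun k => 2 * π * (((k : ℝ) + 1) * n + r) with hfB'def
  have hBsplit : ∑' k : ℕ, (fB k) ^ (-(2 * m))
      = t0 + ∑' k : ℕ, (fB' k) ^ (-(2 * m)) := by
    rw [Summable.tsum_eq_zero_add hsB]
    congr 1
    · simp [hfBdef, ht0def]
    · apply tsum_congr
      intro k
      congr 2
      simp only [hfBdef, hfB'def]
      push_cast
      ring
  have hfB' : ∀ k : ℕ, ((k : ℝ) + 1) ≤ fB' k := by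
    intro k
    have hk : (0 : ℝ) ≤ k := Nat.cast_nonneg k
    have h1 : ((k : ℝ) + 1) ≤ ((k : ℝ) + 1) * n + r := by nlinarith
    simp only [hfB'def]
    nlinarith
  -- split off the k = 0 term of the first sum
  have hsA : Summable (fun k : ℕ => (fA k) ^ (-(2 * m))) := my_summable_aux hq hfA
  set fA' : ℕ → ℝ := fun k => 2 * π * (((k : ℝ) + 2) * n - r) with hfA'def
  have hfA' : ∀ k : ℕ, ((k : ℝ) + 1) ≤ fA' k := by
    intro k
    have hk : (0 : ℝ) ≤ k := Nat.cast_nonneg k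
    have h1 : ((k : ℝ) + 1) ≤ ((k : ℝ) + 2) * n - r := by nlinarith
    have h2 : (0 : ℝ) ≤ ((k : ℝ) + 2) * n - r := by nlinarith
    simp only [hfA'def]
    nlinarith
  have hAsplit : ∑' k : ℕ, (fA k) ^ (-(2 * m))
      = (2 * π * ((n : ℝ) - r)) ^ (-(2 * m)) + ∑' k : ℕ, (fA' k) ^ (-(2 * m)) := by
    rw [Summable.tsum_eq_zero_add hsA]
    congr 1
    · simp [hfAdef]
    · apply tsum_congr
      intro k
      congr 2
      simp only [hfAdef, hfA'def]
      push_cast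
      ring
  -- bounds on the pieces
  have hPn : (0 : ℝ) < π * n := by positivity
  have hA0 : (2 * π * ((n : ℝ) - r)) ^ (-(2 * m)) ≤ (π * n) ^ (-(2 * m)) := by
    apply Real.rpow_le_rpow_of_nonpos hPn (by nlinarith) (by linarith)
  have hAtail : ∑' k : ℕ, (fA' k) ^ (-(2 * m)) ≤ (2 * (π * n)) ^ (-(2 * m)) * cbar := by
    apply my_tsum_bound hq _ (by nlinarith) hfA'
    intro k
    have hk : (0 : ℝ) ≤ k := Nat.cast_nonneg k
    simp only [hfA'def]
    nlinarith
  have hBtail : ∑' k : ℕ, (fB' k) ^ (-(2 * m)) ≤ (2 * (π * n)) ^ (-(2 * m)) * cbar := by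
    apply my_tsum_bound hq _ (by nlinarith) hfB'
    intro k
    have hk : (0 : ℝ) ≤ k := Nat.cast_nonneg k
    simp only [hfB'def]
    nlinarith
  -- rewrite (2πn)^(-2m) = 2^(-2m) (πn)^(-2m) and 2^(1-2m) = 2·2^(-2m)
  have h2split : (2 * (π * n)) ^ (-(2 * m)) = (2 : ℝ) ^ (-(2 * m)) * (π * n) ^ (-(2 * m)) :=
    Real.mul_rpow (by norm_num) hPn.le
  have h2exp : (2 : ℝ) ^ (1 - 2 * m) = 2 * (2 : ℝ) ^ (-(2 * m)) := by
    rw [show (1 : ℝ) - 2 * m = 1 + -(2 * m) by ring,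
      Real.rpow_add (by norm_num : (0:ℝ) < 2), Real.rpow_one]
  -- total bound on R := A + B'
  set R : ℝ := (∑' k : ℕ, (fA k) ^ (-(2 * m))) + ∑' k : ℕ, (fB' k) ^ (-(2 * m)) with hRdef
  set M : ℝ := (1 + (2 : ℝ) ^ (1 - 2 * m) * cbar) * (π * n) ^ (-(2 * m)) with hMdef
  have hRM : R ≤ M := by
    have h := hAsplit
    have hPn2 : (0 : ℝ) ≤ (π * n) ^ (-(2 * m)) := Real.rpow_nonneg hPn.le _
    have h2m : (0 : ℝ) ≤ (2 : ℝ) ^ (-(2 * m)) := Real.rpow_nonneg (by norm_num) _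
    rw [hRdef, h, hMdef, h2exp]
    rw [h2split] at hAtail hBtail
    nlinarith
  have hR0 : 0 ≤ R := by
    rw [hRdef]
    have := tsum_nonneg (L := SummationFilter.unconditional ℕ) (fun k : ℕ => Real.rpow_nonneg
      (le_trans (by positivity) (hfA k)) (-(2 * m)))
    have := tsum_nonneg (L := SummationFilter.unconditional ℕ) (fun k : ℕ => Real.rpow_nonneg
      (le_trans (by positivity) (hfB' k)) (-(2 * m)))
    linarith
  have ht0 : 0 ≤ t0 := Real.rpow_nonneg (by positivity) _
  -- lamD lower bound
  have ht0r : (0 : ℝ) < 2 * π * r := by positivity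
  have sq_rpow : ∀ x : ℝ, 0 < x → (x ^ (-(2 * m))) ^ 2 = x ^ (-(4 * m)) := by
    intro x hx
    rw [← Real.rpow_natCast (x ^ (-(2 * m))) 2, ← Real.rpow_mul hx.le]
    congr 1
    push_cast
    ring
  have hD : t0 ^ 2 ≤ lamD m n r := by
    have h1 : (0 : ℝ) ≤ ∑' k : ℕ, (fA k) ^ (-(4 * m)) :=
      tsum_nonneg (fun k : ℕ => Real.rpow_nonneg
        (le_trans (by positivity) (hfA k)) (-(4 * m)))
    have h2 : (fB 0) ^ (-(4 * m)) ≤ ∑' k : ℕ, (fB k) ^ (-(4 * m)) :=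
      Summable.le_tsum hsB4 0 (fun i _ => Real.rpow_nonneg
        (le_trans (by positivity) (hfB i)) (-(4 * m)))
    have h3 : (fB 0) ^ (-(4 * m)) = t0 ^ 2 := by
      rw [sq_rpow _ ht0r]
      simp [hfBdef]
    rw [lamD]
    rw [h3] at h2
    exact le_add_of_nonneg_of_le h1 h2
  -- final computation
  have hlamC : lamC m n r = t0 + R := by
    rw [lamC, hBsplit, hRdef]; ring
  have hM0 : 0 ≤ M := by
    rw [hMdef]
    have h2m : (0 : ℝ) ≤ (2 : ℝ) ^ (1 - 2 * m) := Real.rpow_nonneg (by norm_num) _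
    positivity
  have hPn4 : ((π * n : ℝ) ^ (-(2 * m))) ^ 2 = (π * n) ^ (-(4 * m)) := sq_rpow _ hPn
  rw [hlamC]
  have hRsq : R ^ 2 ≤ M ^ 2 := by nlinarith
  have htR : t0 * R ≤ t0 * M := mul_le_mul_of_nonneg_left hRM ht0
  have hMsq : M ^ 2 = (1 + (2 : ℝ) ^ (1 - 2 * m) * cbar) ^ 2 * (π * n) ^ (-(4 * m)) := by
    rw [hMdef, ← hPn4]; ring
  nlinarith [hD, hRsq, htR, hMsq]
end
end

section
/- Let m > 1/2, λ > 0, let n ≥ 2 and r be integers with 1 ≤ r ≤ n/2, set c̄_m = Σ_{k=1}^∞ k^{−2m} and c'_m = max{2, (2(1 + 2^{1−2m} c̄_m) + 2^{2m}(1 + 2^{1−2m} c̄_m)²) π^{−2m}}. Define λ_{c,r} = Σ_{k=1}^∞ (2π(kn−r))^{−2m} + Σ_{k=0}^∞ (2π(kn+r))^{−2m} and λ_{d,r} = Σ_{k=1}^∞ (2π(kn−r))^{−4m} + Σ_{k=0}^∞ (2π(kn+r))^{−4m}. Then 1 − λ_{d,r}/(λ + λ_{c,r})² ≤ c'_m (λ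 + n^{−2m}) (2πr)^{2m}. -/
open Real

noncomputable section

/-- `c̄_m = ∑_{k=1}^∞ k^{-2m}`. -/
def cbar (m : ℝ) : ℝ := ∑' k : ℕ, ((k : ℝ) + 1) ^ (-(2 * m))

/-- `c'_m = max{2, (2(1 + 2^{1-2m} c̄_m) + 2^{2m}(1 + 2^{1-2m} c̄_m)²) π^{-2m}}`. -/
def cprime (m : ℝ) : ℝ :=
  max 2 ((2 * (1 + (2 : ℝ) ^ (1 - 2 * m) * cbar m) +
    (2 : ℝ) ^ (2 * m) * (1 + (2 : ℝ) ^ (1 - 2 * m) * cbar m) ^ 2) * π ^ (-(2 * m)))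

lemma aux_summable_shift (m : ℝ) (hm : 1 / 2 < m) :
    Summable (fun k : ℕ => ((k : ℝ) + 1) ^ (-(2 * m))) := by
  have h : Summable (fun k : ℕ => ((k : ℝ)) ^ (-(2 * m))) :=
    Real.summable_nat_rpow.2 (by linarith)
  have h2 := (summable_nat_add_iff 1).2 h
  convert h2 using 2 with k
  · rfl
  · push_cast
    ring_nf

set_option maxHeartbeats 1000000 in
/-- Inequality (point:0) in Lemma S.4:
`1 - λ_{d,r}/(λ + λ_{c,r})² ≤ c'_m (λ + n^{-2m}) (2πr)^{2m}`. -/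
theorem low_frequency_spectrum_bound (m : ℝ) (hm : 1 / 2 < m) (lam : ℝ) (hlam : 0 < lam)
    (n r : ℕ) (hn : 2 ≤ n) (hr1 : 1 ≤ r) (hr : 2 * r ≤ n) :
    1 - lamD m n r / (lam + lamC m n r) ^ 2 ≤
      cprime m * (lam + (n : ℝ) ^ (-(2 * m))) * (2 * π * r) ^ (2 * m) := by
  have hπ : (0:ℝ) < π := Real.pi_pos
  have hm1 : (1:ℝ) < 2 * m := by linarith
  have hrpos : (1:ℝ) ≤ (r:ℝ) := by exact_mod_cast hr1
  have hn2 : (2:ℝ) ≤ (n:ℝ) := by exact_mod_cast hn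
  have hrn : 2 * (r:ℝ) ≤ (n:ℝ) := by exact_mod_cast hr
  have hAb : (0:ℝ) < 2 * π * r := by positivity
  set a : ℝ := (2 * π * r) ^ (-(2*m)) with ha_def
  have ha : 0 < a := Real.rpow_pos_of_pos hAb _
  set D : ℝ := (π * n) ^ (-(2*m)) with hD_def
  have hD : 0 < D := Real.rpow_pos_of_pos (by positivity) _
  have hsum1 : Summable (fun k : ℕ => ((k : ℝ) + 1) ^ (-(2 * m))) := aux_summable_shift m hm
  have hcb : 0 ≤ cbar m := tsum_nonneg fun k => Real.rpow_nonneg (by positivity) _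
  have hsumD : Summable (fun k : ℕ => D * ((k : ℝ) + 1) ^ (-(2 * m))) := hsum1.mul_left D
  have htsumD : ∑' k : ℕ, D * ((k : ℝ) + 1) ^ (-(2 * m)) = D * cbar m := by
    rw [tsum_mul_left]; rfl
  -- the sequences
  set f1 : ℕ → ℝ := fun k => (2 * π * (((k : ℝ) + 1) * n - r)) ^ (-(2 * m)) with hf1_def
  set f2 : ℕ → ℝ := fun k => (2 * π * ((k : ℝ) * n + r)) ^ (-(2 * m)) with hf2_def
  set g2 : ℕ → ℝ := fun k => (2 * π * ((k : ℝ) * n + r)) ^ (-(4 * m)) with hg2_def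
  -- base positivity / bounds
  have hb1 : ∀ k : ℕ, π * n * ((k:ℝ)+1) ≤ 2 * π * (((k : ℝ) + 1) * n - r) := by
    intro k
    have hk1 : (1:ℝ) ≤ (k:ℝ) + 1 := by
      have := Nat.cast_nonneg (α := ℝ) k; linarith
    have : 2 * (r:ℝ) ≤ ((k:ℝ)+1) * n := le_trans hrn (by nlinarith)
    nlinarith
  have hb2 : ∀ k : ℕ, π * n * ((k:ℝ)+1) ≤ 2 * π * ((((k:ℝ)+1)) * n + r) := by
    intro k
    have : (0:ℝ) ≤ (r:ℝ) := by linarith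
    nlinarith [hπ.le, mul_nonneg (by positivity : (0:ℝ) ≤ ((k:ℝ)+1)) (by linarith : (0:ℝ) ≤ (n:ℝ))]
  have hbpos : ∀ k : ℕ, 0 < π * n * ((k:ℝ)+1) := by intro k; positivity
  -- bound on f1
  have hf1_le : ∀ k : ℕ, f1 k ≤ D * ((k:ℝ)+1) ^ (-(2 * m)) := by
    intro k
    have h1 : (2 * π * (((k : ℝ) + 1) * n - r)) ^ (-(2 * m)) ≤ (π * n * ((k:ℝ)+1)) ^ (-(2*m)) :=
      Real.rpow_le_rpow_of_nonpos (hbpos k) (hb1 k) (by linarith)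
    have h2 : (π * n * ((k:ℝ)+1)) ^ (-(2*m)) = D * ((k:ℝ)+1) ^ (-(2 * m)) := by
      rw [hD_def, ← Real.mul_rpow (by positivity) (by positivity)]
    simpa [hf1_def, h2] using h1
  have hb1pos : ∀ k : ℕ, (0:ℝ) < 2 * π * (((k : ℝ) + 1) * n - r) :=
    fun k => lt_of_lt_of_le (hbpos k) (hb1 k)
  have hf1_nonneg : ∀ k : ℕ, 0 ≤ f1 k := fun k => Real.rpow_nonneg (hb1pos k).le _
  have hsum_f1 : Summable f1 := Summable.of_nonneg_of_le hf1_nonneg hf1_le hsumD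
  have htail1 : ∑' k, f1 k ≤ D * cbar m := by
    calc ∑' k, f1 k ≤ ∑' k : ℕ, D * ((k : ℝ) + 1) ^ (-(2 * m)) :=
          Summable.tsum_le_tsum hf1_le hsum_f1 hsumD
      _ = D * cbar m := htsumD
  -- f2 : positivity and summability
  have hb2pos : ∀ k : ℕ, (0:ℝ) < 2 * π * ((k:ℝ) * n + r) := by
    intro k
    have : (0:ℝ) ≤ (k:ℝ) * n := by positivity
    nlinarith
  have hf2_nonneg : ∀ k : ℕ, 0 ≤ f2 k := fun k => Real.rpow_nonneg (hb2pos k).le _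
  have hf2_le : ∀ k : ℕ, f2 k ≤ ((k:ℝ)+1) ^ (-(2 * m)) := by
    intro k
    have hbase : ((k:ℝ)+1) ≤ 2 * π * ((k:ℝ) * n + r) := by
      have hπ3 : (3:ℝ) ≤ π := by linarith [Real.pi_gt_three]
      have hkn : (k:ℝ) ≤ (k:ℝ) * n := by nlinarith [Nat.cast_nonneg (α := ℝ) k]
      nlinarith [Nat.cast_nonneg (α := ℝ) k]
    exact Real.rpow_le_rpow_of_nonpos (by positivity) hbase (by linarith)
  have hsum_f2 : Summable f2 := Summable.of_nonneg_of_le hf2_nonneg hf2_le hsum1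
  have hsplit : ∑' k, f2 k = a + ∑' k, f2 (k + 1) := by
    rw [Summable.tsum_eq_zero_add hsum_f2]
    congr 1
    simp [hf2_def, ha_def]
  have hf2s_le : ∀ k : ℕ, f2 (k+1) ≤ D * ((k:ℝ)+1) ^ (-(2 * m)) := by
    intro k
    have h1 : f2 (k+1) ≤ (π * n * ((k:ℝ)+1)) ^ (-(2*m)) := by
      have := Real.rpow_le_rpow_of_nonpos (hbpos k) (hb2 k) (by linarith : -(2*m) ≤ 0)
      simpa [hf2_def, Nat.cast_add, Nat.cast_one] using this
    have h2 : (π * n * ((k:ℝ)+1)) ^ (-(2*m)) = D * ((k:ℝ)+1) ^ (-(2 * m)) := by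
      rw [hD_def, ← Real.mul_rpow (by positivity) (by positivity)]
    linarith [h1, h2.le]
  have htail2 : ∑' k, f2 (k + 1) ≤ D * cbar m := by
    have hs : Summable (fun k => f2 (k+1)) := (summable_nat_add_iff 1).2 hsum_f2
    calc ∑' k, f2 (k+1) ≤ ∑' k : ℕ, D * ((k : ℝ) + 1) ^ (-(2 * m)) :=
          Summable.tsum_le_tsum hf2s_le hs hsumD
      _ = D * cbar m := htsumD
  have htail2_nonneg : 0 ≤ ∑' k, f2 (k + 1) :=
    tsum_nonneg fun k => hf2_nonneg (k+1)
  have htail1_nonneg : 0 ≤ ∑' k, f1 k := tsum_nonneg hf1_nonneg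
  -- lamC bounds
  have hlamC_eq : lamC m n r = (∑' k, f1 k) + (a + ∑' k, f2 (k+1)) := by
    rw [lamC, ← hsplit]
  have hC_ge : a ≤ lamC m n r := by rw [hlamC_eq]; linarith
  have hC_le : lamC m n r ≤ a + 2 * (D * cbar m) := by rw [hlamC_eq]; linarith
  -- lamD lower bound
  have hg2_nonneg : ∀ k : ℕ, 0 ≤ g2 k := fun k => Real.rpow_nonneg (hb2pos k).le _
  have hg2_le : ∀ k : ℕ, g2 k ≤ ((k:ℝ)+1) ^ (-(2 * m)) := by
    intro k
    have hbase : ((k:ℝ)+1) ≤ 2 * π * ((k:ℝ) * n + r) := by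
      have hπ3 : (3:ℝ) ≤ π := by linarith [Real.pi_gt_three]
      have hkn : (k:ℝ) ≤ (k:ℝ) * n := by nlinarith [Nat.cast_nonneg (α := ℝ) k]
      nlinarith [Nat.cast_nonneg (α := ℝ) k]
    calc g2 k ≤ ((k:ℝ)+1) ^ (-(4 * m)) :=
          Real.rpow_le_rpow_of_nonpos (by positivity) hbase (by linarith)
      _ ≤ ((k:ℝ)+1) ^ (-(2 * m)) :=
          Real.rpow_le_rpow_of_exponent_le (by linarith [Nat.cast_nonneg (α := ℝ) k]) (by linarith)
  have hsum_g2 : Summable g2 := Summable.of_nonneg_of_le hg2_nonneg hg2_le hsum1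
  have ha2 : a ^ 2 = (2 * π * (r:ℝ)) ^ (-(4 * m)) := by
    rw [ha_def, sq, ← Real.rpow_add hAb]
    congr 1
    ring
  have hD_ge : a ^ 2 ≤ lamD m n r := by
    have h0 : g2 0 ≤ ∑' k, g2 k := Summable.le_tsum hsum_g2 0 (fun i _ => hg2_nonneg i)
    have hg20 : g2 0 = a ^ 2 := by
      rw [ha2, hg2_def]; norm_num
    have h1 : (0:ℝ) ≤ ∑' k : ℕ, (2 * π * (((k : ℝ) + 1) * n - r)) ^ (-(4 * m)) :=
      tsum_nonneg fun k => Real.rpow_nonneg (hb1pos k).le _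
    rw [lamD]
    calc a ^ 2 = g2 0 := hg20.symm
      _ ≤ ∑' k, g2 k := h0
      _ ≤ _ := by rw [hg2_def]; linarith
  -- main algebra
  set s : ℝ := lam + lamC m n r with hs_def
  have hsa : a < s := by rw [hs_def]; linarith
  have hs0 : 0 < s := lt_trans ha hsa
  have hInv : a = ((2 * π * (r:ℝ)) ^ (2*m))⁻¹ := by
    rw [ha_def, Real.rpow_neg hAb.le]
  have hApos : (0:ℝ) < (2 * π * (r:ℝ)) ^ (2*m) := Real.rpow_pos_of_pos hAb _
  have step1 : 1 - lamD m n r / s ^ 2 ≤ 2 * (s - a) / a := by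
    have h1 : 1 - lamD m n r / s ^ 2 ≤ 1 - a^2 / s ^ 2 := by
      have h : a^2 / s^2 ≤ lamD m n r / s^2 := by gcongr
      linarith
    have h2 : 1 - a^2 / s^2 = (s - a) * (s + a) / s^2 := by
      field_simp; ring
    have h3 : (s - a) * (s + a) / s^2 ≤ (s - a) * (2 * s) / s^2 := by
      gcongr
      all_goals linarith
    have h4 : (s - a) * (2 * s) / s^2 = 2 * (s - a) / s := by
      field_simp
    have h5 : 2 * (s - a) / s ≤ 2 * (s - a) / a := by
      gcongr
      all_goals linarith
    linarith
  have step2 : 2 * (s - a) / a = 2 * (s - a) * (2 * π * (r:ℝ)) ^ (2*m) := by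
    rw [hInv, div_eq_mul_inv, inv_inv]
  -- constant bounds
  have hcp2 : (2:ℝ) ≤ cprime m := le_max_left _ _
  have hpow4 : (2:ℝ) ^ (2*m) * (2:ℝ) ^ (2 - 2*m) = 4 := by
    rw [← Real.rpow_add (by norm_num : (0:ℝ) < 2)]
    norm_num
  have hcp4 : 4 * cbar m * π ^ (-(2*m)) ≤ cprime m := by
    refine le_trans ?_ (le_max_right _ _)
    have hB : (0:ℝ) < (2:ℝ) ^ (1 - 2*m) := Real.rpow_pos_of_pos (by norm_num) _
    have hπp : (0:ℝ) < π ^ (-(2*m)) := Real.rpow_pos_of_pos hπ _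
    have hBsq : (2:ℝ) ^ (2 - 2*m) * cbar m ≤ (1 + (2 : ℝ) ^ (1 - 2 * m) * cbar m) ^ 2 := by
      have h22 : (2:ℝ) ^ (2 - 2*m) = 2 * (2:ℝ) ^ (1 - 2*m) := by
        rw [show (2:ℝ) - 2*m = 1 + (1 - 2*m) by ring, Real.rpow_add (by norm_num : (0:ℝ) < 2)]
        norm_num
      nlinarith [sq_nonneg ((2:ℝ) ^ (1 - 2*m) * cbar m), hB, hcb]
    have h2m : (0:ℝ) < (2:ℝ) ^ (2*m) := Real.rpow_pos_of_pos (by norm_num) _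
    have key : 4 * cbar m ≤ 2 * (1 + (2 : ℝ) ^ (1 - 2 * m) * cbar m) +
        (2 : ℝ) ^ (2 * m) * (1 + (2 : ℝ) ^ (1 - 2 * m) * cbar m) ^ 2 := by
      have := mul_le_mul_of_nonneg_left hBsq h2m.le
      rw [← mul_assoc, hpow4] at this
      nlinarith [mul_nonneg hB.le hcb]
    nlinarith
  have hDsplit : D = π ^ (-(2*m)) * (n:ℝ) ^ (-(2*m)) := by
    rw [hD_def, Real.mul_rpow hπ.le (by positivity)]
  have hnpow : (0:ℝ) < (n:ℝ) ^ (-(2*m)) := Real.rpow_pos_of_pos (by linarith) _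
  have step3 : 2 * (s - a) ≤ cprime m * (lam + (n:ℝ) ^ (-(2*m))) := by
    have h1 : s - a ≤ lam + 2 * (D * cbar m) := by rw [hs_def]; linarith
    have h2 : 4 * (D * cbar m) = (4 * cbar m * π ^ (-(2*m))) * (n:ℝ) ^ (-(2*m)) := by
      rw [hDsplit]; ring
    have h3 : (4 * cbar m * π ^ (-(2*m))) * (n:ℝ) ^ (-(2*m)) ≤ cprime m * (n:ℝ) ^ (-(2*m)) :=
      mul_le_mul_of_nonneg_right hcp4 hnpow.le
    nlinarith
  calc 1 - lamD m n r / s ^ 2 ≤ 2 * (s - a) / a := step1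
    _ = 2 * (s - a) * (2 * π * (r:ℝ)) ^ (2*m) := step2
    _ ≤ cprime m * (lam + (n:ℝ) ^ (-(2*m))) * (2 * π * (r:ℝ)) ^ (2*m) :=
        mul_le_mul_of_nonneg_right step3 hApos.le

end
end
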